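/- Let G act measurably on a standard probability space (X, ν), where ν is μ-stationary for an admissible probability measure μ on G. Let u: X → ℝ be measurable such that f(g,x) := u(x) - u(gx) belongs to L¹(G × X, μ ⊗ ν). Then ∫_G ∫_X (u(x) - u(gx)) dν(x) dμ(g) = 0. -/

import Mathlib

open MeasureTheory

/-- The support of a measure on a topological space: points all of whose open
neighbourhoods have positive measure. -/
def measureSupport {G : Type*} [TopologicalSpace G] [MeasurableSpace G]
    (μ : Measure G) : Set G :=
  {g | ∀ U : Set G, IsOpen U → g ∈ U → 0 < μ U}

/-- Convolution powers of a measure on a group. -/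
noncomputable def convPow {G : Type*} [Monoid G] [MeasurableSpace G]
    (μ : Measure G) : ℕ → Measure G
  | 0 => Measure.dirac 1
  | n + 1 => (convPow μ n).mconv μ

/-- A probability measure `μ` on a locally compact second countable group is admissible if
the semigroup generated by its support is dense and some convolution power of `μ` is
absolutely continuous with respect to the Haar measure. -/
def Admissible {G : Type*} [Group G] [TopologicalSpace G] [IsTopologicalGroup G]
    [LocallyCompactSpace G] [MeasurableSpace G] [BorelSpace G] (μ : Measure G) : Prop :=
  Dense (Submonoid.closure (measureSupport μ) : Set G) ∧
    ∃ n : ℕ, 0 < n ∧ convPow μ n ≪ (Measure.haar : Measure G)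

/-- Averaged cocycle vanishing: if `ν` is `μ`-stationary for an admissible `μ` and
`(g,x) ↦ u(x) - u(gx)` is integrable on `G × X`, then its double integral vanishes. -/
theorem integral_integral_sub_smul_eq_zero
    {G : Type*} [Group G] [TopologicalSpace G] [IsTopologicalGroup G]
    [LocallyCompactSpace G] [SecondCountableTopology G]
    [MeasurableSpace G] [BorelSpace G]
    {X : Type*} [MeasurableSpace X] [StandardBorelSpace X] [MulAction G X]
    (hsmul : Measurable fun p : G × X => p.1 • p.2)
    (μ : Measure G) [IsProbabilityMeasure μ] (hμ : Admissible μ)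
    (ν : Measure X) [IsProbabilityMeasure ν]
    (hstat : ∀ A : Set X, MeasurableSet A → ν A = ∫⁻ g, ν ((g • ·) ⁻¹' A) ∂μ)
    (u : X → ℝ) (hu : Measurable u)
    (hint : Integrable (fun p : G × X => u p.2 - u (p.1 • p.2)) (μ.prod ν)) :
    ∫ g, ∫ x, (u x - u (g • x)) ∂ν ∂μ = 0 := by
  rw [← MeasureTheory.integral_prod _ hint]
  -- pushforward under smul is ν
  have hmap : Measure.map (fun p : G × X => p.1 • p.2) (μ.prod ν) = ν := by
    ext A hA
    rw [Measure.map_apply hsmul hA, Measure.prod_apply (hsmul hA)]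
    exact (hstat A hA).symm
  -- truncation
  set τ : ℕ → ℝ → ℝ := fun n t => max (-(n : ℝ)) (min n t) with hτ
  have hτcont : ∀ n, Continuous (τ n) := fun n =>
    continuous_const.max (continuous_const.min continuous_id)
  have hτlip : ∀ n a b, |τ n a - τ n b| ≤ |a - b| := by
    intro n a b
    calc |τ n a - τ n b| = |max (min (n:ℝ) a) (-(n:ℝ)) - max (min (n:ℝ) b) (-(n:ℝ))| := by
          rw [max_comm, max_comm (min (n:ℝ) b)]
      _ ≤ |min (n:ℝ) a - min (n:ℝ) b| := abs_max_sub_max_le_abs _ _ _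
      _ ≤ max |(n:ℝ) - n| |a - b| := abs_min_sub_min_le_max _ _ _ _
      _ ≤ |a - b| := by simp
  have hτeq : ∀ (t : ℝ) (n : ℕ), |t| ≤ n → τ n t = t := by
    intro t n h
    have h1 : t ≤ n := (le_abs_self t).trans h
    have h2 : -(n:ℝ) ≤ t := neg_le_of_abs_le h
    simp [hτ, min_eq_right h1, max_eq_right (h2.trans (min_eq_right h1).symm.le)]
  have hτbd : ∀ n t, |τ n t| ≤ n := by
    intro n t
    rw [abs_le]
    exact ⟨le_max_left _ _, max_le (neg_nonpos.mpr (Nat.cast_nonneg n) |>.trans (Nat.cast_nonneg n)) (min_le_left _ _)⟩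
  -- integrability of truncations
  have hvmeas : ∀ n, Measurable (τ n ∘ u) := fun n => (hτcont n).measurable.comp hu
  have hi1 : ∀ n : ℕ, Integrable (fun p : G × X => τ n (u p.2)) (μ.prod ν) := by
    intro n
    refine (integrable_const (n:ℝ)).mono' ((hvmeas n).comp measurable_snd).aestronglyMeasurable ?_
    exact Filter.Eventually.of_forall fun p => by simpa using hτbd n (u p.2)
  have hi2 : ∀ n : ℕ, Integrable (fun p : G × X => τ n (u (p.1 • p.2))) (μ.prod ν) := by
    intro n
    refine (integrable_const (n:ℝ)).mono' ((hτcont n).measurable.comp (hu.comp hsmul)).aestronglyMeasurable ?_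
    exact Filter.Eventually.of_forall fun p => by simpa using hτbd n (u (p.1 • p.2))
  -- each truncated integral is zero
  have hzero : ∀ n : ℕ, ∫ p : G × X, (τ n (u p.2) - τ n (u (p.1 • p.2))) ∂(μ.prod ν) = 0 := by
    intro n
    rw [integral_sub (hi1 n) (hi2 n)]
    have e1 : ∫ p : G × X, τ n (u p.2) ∂(μ.prod ν) = ∫ x, τ n (u x) ∂ν := by
      have h := integral_map (μ := μ.prod ν) (φ := Prod.snd) (f := fun x => τ n (u x))
        measurable_snd.aemeasurable ((hvmeas n).aestronglyMeasurable)
      rw [Measure.map_snd_prod, measure_univ, one_smul] at h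
      exact h.symm
    have e2 : ∫ p : G × X, τ n (u (p.1 • p.2)) ∂(μ.prod ν) = ∫ x, τ n (u x) ∂ν := by
      have h := integral_map (μ := μ.prod ν) (φ := fun p : G × X => p.1 • p.2)
        (f := fun x => τ n (u x)) hsmul.aemeasurable ((hvmeas n).aestronglyMeasurable)
      rw [hmap] at h
      exact h.symm
    rw [e1, e2, sub_self]
  -- dominated convergence
  have := MeasureTheory.tendsto_integral_of_dominated_convergence
    (F := fun n (p : G × X) => τ n (u p.2) - τ n (u (p.1 • p.2)))
    (f := fun p : G × X => u p.2 - u (p.1 • p.2))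
    (μ := μ.prod ν)
    (fun p => |u p.2 - u (p.1 • p.2)|)
    (fun n => ((hi1 n).sub (hi2 n)).aestronglyMeasurable)
    hint.abs
    (fun n => Filter.Eventually.of_forall fun p => by
      simpa using hτlip n (u p.2) (u (p.1 • p.2)))
    (Filter.Eventually.of_forall fun p => by
      apply Filter.Tendsto.congr' _ tendsto_const_nhds
      filter_upwards [Filter.eventually_ge_atTop (⌈max |u p.2| |u (p.1 • p.2)|⌉₊)] with n hn
      have hb : max |u p.2| |u (p.1 • p.2)| ≤ n := (Nat.le_ceil _).trans (Nat.cast_le.mpr hn)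
      rw [hτeq _ n ((le_max_left _ _).trans hb), hτeq _ n ((le_max_right _ _).trans hb)])
  simp only [hzero] at this
  exact tendsto_nhds_unique this tendsto_const_nhds
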